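/- arXiv:0909.0617 — 4 statements merged into one kernel-verified Lean document; each statement's English description precedes it below -/
import Mathlib

section
/- Let M₀, M₁, M₂, M₃ ≥ 0 and let (Sₙ) be the monic orthogonal sequence for the four-mass Hermite–Sobolev inner product. Let (Lₙ) be the sequence of real polynomials such that each Lₙ is monic of degree n and ∫₀^∞ Lₙ(x)p(x)x^{−1/2}e^{−x} dx + M₀Lₙ(0)p(0) + 4M₂Lₙ′(0)p′(0) = 0 for every polynomial p with deg p < n, and let (L̃ₙ) be the sequence such that each L̃ₙ is monic of degree n and ∫₀^∞ L̃ₙ(x)p(x)x^{1/2}e^{−x} dx + M₁L̃ₙ(0)p(0) + 36M₃L̃ₙ′(0)p′(0) = 0 for every polynomial p with deg p < n. Then for every n ≥ 0, S₂ₙ(x) = Lₙ(x²) and S₂ₙ₊₁(x) = x·L̃ₙ(x²) as identities of real polynomials. -/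
open Polynomial Filter MeasureTheory

/-- The four-mass Hermite--Sobolev inner product with masses `M₀, M₁, M₂, M₃` at the origin. -/
noncomputable def fourMassInner (M₀ M₁ M₂ M₃ : ℝ) (P R : Polynomial ℝ) : ℝ :=
  (∫ x : ℝ, P.eval x * R.eval x * Real.exp (-x ^ 2)) +
    M₀ * (P.eval 0 * R.eval 0) +
    M₁ * ((derivative P).eval 0 * (derivative R).eval 0) +
    M₂ * ((derivative (derivative P)).eval 0 * (derivative (derivative R)).eval 0) +
    M₃ * ((derivative (derivative (derivative P))).eval 0 *
      (derivative (derivative (derivative R))).eval 0)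

/-- `S` is the monic orthogonal polynomial sequence for the inner product `ip`. -/
def IsMonicOrthSeq (ip : Polynomial ℝ → Polynomial ℝ → ℝ) (S : ℕ → Polynomial ℝ) : Prop :=
  ∀ n : ℕ, (S n).Monic ∧ (S n).degree = (n : ℕ) ∧
    ∀ p : Polynomial ℝ, p.degree < (n : ℕ) → ip (S n) p = 0

/-- The Laguerre--Sobolev type inner product with weight `x^α e^{-x}` on `(0,∞)` and
point masses `N₀`, `N₁` on value and first derivative at the origin. -/
noncomputable def laguerreSobolevInner (α N₀ N₁ : ℝ) (P R : Polynomial ℝ) : ℝ :=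
  (∫ x in Set.Ioi (0 : ℝ), P.eval x * R.eval x * x ^ α * Real.exp (-x)) +
    N₀ * (P.eval 0 * R.eval 0) +
    N₁ * ((derivative P).eval 0 * (derivative R).eval 0)

namespace StmtAux

/-! ### Integrability of polynomials against the Gaussian weight -/

lemma integrable_poly_gauss (P : ℝ[X]) :
    Integrable (fun x : ℝ => P.eval x * Real.exp (-x ^ 2)) := by
  induction P using Polynomial.induction_on' with
  | add p q hp hq => simpa [add_mul] using (hp.add hq : Integrable (fun x : ℝ => p.eval x * Real.exp (-x ^ 2) + q.eval x * Real.exp (-x ^ 2)))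
  | monomial n a =>
      have h := integrable_rpow_mul_exp_neg_mul_sq (b := 1) one_pos (s := (n : ℝ))
        (lt_of_lt_of_le neg_one_lt_zero (Nat.cast_nonneg n))
      simp only [Real.rpow_natCast, neg_one_mul] at h
      simpa [eval_monomial, mul_assoc] using h.const_mul a

lemma integrable_poly_gauss2 (P R : ℝ[X]) :
    Integrable (fun x : ℝ => P.eval x * R.eval x * Real.exp (-x ^ 2)) := by
  simpa [eval_mul] using integrable_poly_gauss (P * R)

/-! ### Linearity of the four-mass inner product -/

lemma fmi_sub_left (M₀ M₁ M₂ M₃ : ℝ) (P Q R : ℝ[X]) :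
    fourMassInner M₀ M₁ M₂ M₃ (P - Q) R
      = fourMassInner M₀ M₁ M₂ M₃ P R - fourMassInner M₀ M₁ M₂ M₃ Q R := by
  unfold fourMassInner
  have hint : (∫ x : ℝ, (P - Q).eval x * R.eval x * Real.exp (-x ^ 2))
      = (∫ x : ℝ, P.eval x * R.eval x * Real.exp (-x ^ 2))
        - ∫ x : ℝ, Q.eval x * R.eval x * Real.exp (-x ^ 2) := by
    rw [← integral_sub (integrable_poly_gauss2 P R) (integrable_poly_gauss2 Q R)]
    congr 1; funext x; simp [eval_sub]; ring
  rw [hint]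
  simp only [derivative_sub, eval_sub]
  ring

lemma fmi_zero_right (M₀ M₁ M₂ M₃ : ℝ) (P : ℝ[X]) :
    fourMassInner M₀ M₁ M₂ M₃ P 0 = 0 := by
  simp [fourMassInner]

lemma fmi_add_right (M₀ M₁ M₂ M₃ : ℝ) (P R₁ R₂ : ℝ[X]) :
    fourMassInner M₀ M₁ M₂ M₃ P (R₁ + R₂)
      = fourMassInner M₀ M₁ M₂ M₃ P R₁ + fourMassInner M₀ M₁ M₂ M₃ P R₂ := by
  unfold fourMassInner
  have hint : (∫ x : ℝ, P.eval x * (R₁ + R₂).eval x * Real.exp (-x ^ 2))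
      = (∫ x : ℝ, P.eval x * R₁.eval x * Real.exp (-x ^ 2))
        + ∫ x : ℝ, P.eval x * R₂.eval x * Real.exp (-x ^ 2) := by
    rw [← integral_add (integrable_poly_gauss2 P R₁) (integrable_poly_gauss2 P R₂)]
    congr 1; funext x; simp [eval_add]; ring
  rw [hint]
  simp only [derivative_add, eval_add]
  ring

lemma fmi_Cmul_right (M₀ M₁ M₂ M₃ : ℝ) (a : ℝ) (P R : ℝ[X]) :
    fourMassInner M₀ M₁ M₂ M₃ P (C a * R) = a * fourMassInner M₀ M₁ M₂ M₃ P R := by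
  unfold fourMassInner
  have hint : (∫ x : ℝ, P.eval x * (C a * R).eval x * Real.exp (-x ^ 2))
      = a * ∫ x : ℝ, P.eval x * R.eval x * Real.exp (-x ^ 2) := by
    rw [← integral_const_mul a _]
    congr 1; funext x; simp [eval_mul]; ring
  rw [hint]
  simp only [derivative_C_mul, eval_mul, eval_C]
  ring

lemma fmi_sum_right (M₀ M₁ M₂ M₃ : ℝ) (P : ℝ[X]) (s : Finset ℕ) (f : ℕ → ℝ[X]) :
    fourMassInner M₀ M₁ M₂ M₃ P (∑ i ∈ s, f i)
      = ∑ i ∈ s, fourMassInner M₀ M₁ M₂ M₃ P (f i) := by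
  classical
  induction s using Finset.induction_on with
  | empty => simpa using fmi_zero_right M₀ M₁ M₂ M₃ P
  | insert _ _ h ih =>
      rw [Finset.sum_insert h, Finset.sum_insert h, fmi_add_right, ih]

/-- Orthogonality against monomials extends to all polynomials of small degree. -/
lemma fmi_orth_of_monomials (M₀ M₁ M₂ M₃ : ℝ) (T : ℝ[X]) (m : ℕ)
    (h : ∀ k : ℕ, k < m → fourMassInner M₀ M₁ M₂ M₃ T (X ^ k) = 0)
    (p : ℝ[X]) (hp : p.degree < (m : ℕ)) : fourMassInner M₀ M₁ M₂ M₃ T p = 0 := by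
  conv_lhs => rw [p.as_sum_support_C_mul_X_pow]
  rw [fmi_sum_right]
  refine Finset.sum_eq_zero fun i hi => ?_
  rw [fmi_Cmul_right, h i ?_, mul_zero]
  have hle := Polynomial.le_degree_of_ne_zero (Polynomial.mem_support_iff.mp hi)
  exact_mod_cast lt_of_le_of_lt hle hp

/-! ### Positivity and uniqueness -/

lemma integral_sq_gauss_pos (d : ℝ[X]) (hd : d ≠ 0) :
    0 < ∫ x : ℝ, d.eval x * d.eval x * Real.exp (-x ^ 2) := by
  set f : ℝ → ℝ := fun x => d.eval x * d.eval x * Real.exp (-x ^ 2) with hf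
  have hnonneg : 0 ≤ f := fun x => mul_nonneg (mul_self_nonneg _) (Real.exp_pos _).le
  rw [integral_pos_iff_support_of_nonneg_ae (Filter.Eventually.of_forall hnonneg)
    (integrable_poly_gauss2 d d)]
  have hsub : {x : ℝ | d.IsRoot x}ᶜ ⊆ Function.support f := by
    intro x hx
    have hx' : d.eval x ≠ 0 := hx
    simp only [Function.mem_support, hf]
    positivity
  have hfin : ({x : ℝ | d.IsRoot x}).Finite := Polynomial.finite_setOf_isRoot hd
  by_contra hpos
  have h0 : volume (Function.support f) = 0 := by
    simpa using (not_lt.mp hpos)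
  have h1 : volume ({x : ℝ | d.IsRoot x}ᶜ) = 0 :=
    measure_mono_null hsub h0
  have h2 : (volume : Measure ℝ) Set.univ
      ≤ volume ({x : ℝ | d.IsRoot x}) + volume ({x : ℝ | d.IsRoot x}ᶜ) :=
    measure_univ_le_add_compl _
  rw [hfin.measure_zero, h1] at h2
  simp [Real.volume_univ] at h2

lemma fmi_self_pos (M₀ M₁ M₂ M₃ : ℝ) (h₀ : 0 ≤ M₀) (h₁ : 0 ≤ M₁) (h₂ : 0 ≤ M₂) (h₃ : 0 ≤ M₃)
    (d : ℝ[X]) (hd : d ≠ 0) : 0 < fourMassInner M₀ M₁ M₂ M₃ d d := by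
  unfold fourMassInner
  have hint := integral_sq_gauss_pos d hd
  have t0 := mul_nonneg h₀ (mul_self_nonneg (d.eval 0))
  have t1 := mul_nonneg h₁ (mul_self_nonneg ((derivative d).eval 0))
  have t2 := mul_nonneg h₂ (mul_self_nonneg ((derivative (derivative d)).eval 0))
  have t3 := mul_nonneg h₃ (mul_self_nonneg ((derivative (derivative (derivative d))).eval 0))
  linarith

/-- Uniqueness: any monic polynomial of the right degree orthogonal to lower degrees
agrees with the corresponding member of the monic orthogonal sequence. -/
lemma unique_step (M₀ M₁ M₂ M₃ : ℝ) (h₀ : 0 ≤ M₀) (h₁ : 0 ≤ M₁) (h₂ : 0 ≤ M₂) (h₃ : 0 ≤ M₃)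
    (S : ℕ → ℝ[X]) (hS : IsMonicOrthSeq (fourMassInner M₀ M₁ M₂ M₃) S)
    (m : ℕ) (T : ℝ[X]) (hTm : T.Monic) (hTd : T.degree = (m : ℕ))
    (hTo : ∀ p : ℝ[X], p.degree < (m : ℕ) → fourMassInner M₀ M₁ M₂ M₃ T p = 0) :
    S m = T := by
  by_contra hne
  have hdne : S m - T ≠ 0 := sub_ne_zero.mpr hne
  have hdeg : (S m - T).degree < (m : ℕ) := by
    have h := Polynomial.degree_sub_lt (p := S m) (q := T)
      (by rw [(hS m).2.1, hTd]) (hS m).1.ne_zero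
      (by rw [(hS m).1.leadingCoeff, hTm.leadingCoeff])
    rwa [(hS m).2.1] at h
  have h1 : fourMassInner M₀ M₁ M₂ M₃ (S m) (S m - T) = 0 := (hS m).2.2 _ hdeg
  have h2 : fourMassInner M₀ M₁ M₂ M₃ T (S m - T) = 0 := hTo _ hdeg
  have h3 : fourMassInner M₀ M₁ M₂ M₃ (S m - T) (S m - T) = 0 := by
    rw [fmi_sub_left, h1, h2, sub_zero]
  exact absurd h3 (ne_of_gt (fmi_self_pos M₀ M₁ M₂ M₃ h₀ h₁ h₂ h₃ _ hdne))

/-! ### Change of variables -/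

lemma herm_to_lag (f : ℝ[X]) :
    (∫ x : ℝ, f.eval (x ^ 2) * Real.exp (-x ^ 2))
      = ∫ t in Set.Ioi (0:ℝ), f.eval t * t ^ (-(1/2) : ℝ) * Real.exp (-t) := by
  have h1 : (∫ x : ℝ, f.eval (x ^ 2) * Real.exp (-x ^ 2))
      = 2 * ∫ x in Set.Ioi (0:ℝ), f.eval (x ^ 2) * Real.exp (-x ^ 2) := by
    rw [← integral_comp_abs (f := fun y : ℝ => f.eval (y ^ 2) * Real.exp (-y ^ 2))]
    congr 1; funext x; rw [sq_abs]
  have h2 := integral_comp_rpow_Ioi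
    (fun t : ℝ => f.eval t * t ^ (-(1/2) : ℝ) * Real.exp (-t)) (p := 2) two_ne_zero
  rw [h1, ← h2, ← integral_const_mul 2 _]
  refine setIntegral_congr_fun measurableSet_Ioi fun x hx => ?_
  have hx' : (0:ℝ) < x := hx
  have e1 : x ^ (2:ℝ) = x ^ (2:ℕ) := by
    rw [show (2:ℝ) = ((2:ℕ):ℝ) by norm_num, Real.rpow_natCast]
  have e2 : (x ^ (2:ℕ)) ^ (-(1/2) : ℝ) = x⁻¹ := by
    rw [← Real.rpow_natCast x 2, ← Real.rpow_mul hx'.le]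
    norm_num [Real.rpow_neg_one]
  have e3 : x ^ ((2:ℝ) - 1) = x := by norm_num
  simp only [smul_eq_mul, e1, e2, e3]
  field_simp
  ring

lemma integral_odd_gauss (f : ℝ[X]) :
    (∫ x : ℝ, x * f.eval (x ^ 2) * Real.exp (-x ^ 2)) = 0 := by
  have h := integral_neg_eq_self (fun x : ℝ => x * f.eval (x ^ 2) * Real.exp (-x ^ 2)) volume
  simp only [neg_sq, neg_mul] at h
  rw [integral_neg] at h
  linarith

/-! ### The inner products of even/odd polynomials -/

lemma fmi_even_even (M₀ M₁ M₂ M₃ : ℝ) (P Q : ℝ[X]) :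
    fourMassInner M₀ M₁ M₂ M₃ (P.comp (X ^ 2)) (Q.comp (X ^ 2))
      = laguerreSobolevInner (-(1/2)) M₀ (4 * M₂) P Q := by
  unfold fourMassInner laguerreSobolevInner
  have hint : (∫ x : ℝ, (P.comp (X ^ 2)).eval x * (Q.comp (X ^ 2)).eval x * Real.exp (-x ^ 2))
      = ∫ t in Set.Ioi (0:ℝ), P.eval t * Q.eval t * t ^ (-(1/2) : ℝ) * Real.exp (-t) := by
    have h := herm_to_lag (P * Q)
    simp only [eval_mul] at h
    rw [← h]
    congr 1; funext x; simp [eval_comp]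
  rw [hint]
  have d1 : (derivative (P.comp (X ^ 2))).eval 0 = 0 := by simp [derivative_comp]
  have d1' : (derivative (Q.comp (X ^ 2))).eval 0 = 0 := by simp [derivative_comp]
  have d2 : (derivative (derivative (P.comp (X ^ 2)))).eval 0 = 2 * (derivative P).eval 0 := by
    simp [derivative_comp, derivative_mul, one_add_one_eq_two]
  have d2' : (derivative (derivative (Q.comp (X ^ 2)))).eval 0 = 2 * (derivative Q).eval 0 := by
    simp [derivative_comp, derivative_mul, one_add_one_eq_two]
  have d3 : (derivative (derivative (derivative (P.comp (X ^ 2))))).eval 0 = 0 := by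
    simp [derivative_comp, derivative_mul]
  have d3' : (derivative (derivative (derivative (Q.comp (X ^ 2))))).eval 0 = 0 := by
    simp [derivative_comp, derivative_mul]
  have e0 : (P.comp (X ^ 2)).eval 0 = P.eval 0 := by simp [eval_comp]
  have e0' : (Q.comp (X ^ 2)).eval 0 = Q.eval 0 := by simp [eval_comp]
  rw [d1, d1', d2, d2', d3, d3', e0, e0']
  ring

lemma fmi_odd_odd (M₀ M₁ M₂ M₃ : ℝ) (P Q : ℝ[X]) :
    fourMassInner M₀ M₁ M₂ M₃ (X * P.comp (X ^ 2)) (X * Q.comp (X ^ 2))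
      = laguerreSobolevInner (1/2) M₁ (36 * M₃) P Q := by
  unfold fourMassInner laguerreSobolevInner
  have hint : (∫ x : ℝ, (X * P.comp (X ^ 2)).eval x * (X * Q.comp (X ^ 2)).eval x
        * Real.exp (-x ^ 2))
      = ∫ t in Set.Ioi (0:ℝ), P.eval t * Q.eval t * t ^ ((1:ℝ)/2) * Real.exp (-t) := by
    have h := herm_to_lag (X * (P * Q))
    have hl : (∫ x : ℝ, (X * (P * Q)).eval (x ^ 2) * Real.exp (-x ^ 2))
        = ∫ x : ℝ, (X * P.comp (X ^ 2)).eval x * (X * Q.comp (X ^ 2)).eval x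
            * Real.exp (-x ^ 2) := by
      congr 1; funext x; simp [eval_comp]; ring
    rw [hl] at h
    rw [h]
    refine setIntegral_congr_fun measurableSet_Ioi fun t ht => ?_
    have ht' : (0:ℝ) < t := ht
    have e4 : t * t ^ (-(1/2) : ℝ) = t ^ ((1:ℝ)/2) := by
      nth_rewrite 1 [← Real.rpow_one t]
      rw [← Real.rpow_add ht']
      norm_num
    simp only [eval_mul, eval_X]
    rw [← e4]
    ring
  rw [hint]
  have d0 : (X * P.comp (X ^ 2)).eval 0 = 0 := by simp
  have d0' : (X * Q.comp (X ^ 2)).eval 0 = 0 := by simp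
  have d1 : (derivative (X * P.comp (X ^ 2))).eval 0 = P.eval 0 := by
    simp [derivative_mul, derivative_comp]
  have d1' : (derivative (X * Q.comp (X ^ 2))).eval 0 = Q.eval 0 := by
    simp [derivative_mul, derivative_comp]
  have d2 : (derivative (derivative (X * P.comp (X ^ 2)))).eval 0 = 0 := by
    simp [derivative_mul, derivative_comp]
  have d2' : (derivative (derivative (X * Q.comp (X ^ 2)))).eval 0 = 0 := by
    simp [derivative_mul, derivative_comp]
  have d3 : (derivative (derivative (derivative (X * P.comp (X ^ 2))))).eval 0
      = 6 * (derivative P).eval 0 := by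
    simp [derivative_mul, derivative_comp]; ring
  have d3' : (derivative (derivative (derivative (X * Q.comp (X ^ 2))))).eval 0
      = 6 * (derivative Q).eval 0 := by
    simp [derivative_mul, derivative_comp]; ring
  rw [d0, d0', d1, d1', d2, d2', d3, d3']
  ring

lemma fmi_even_odd (M₀ M₁ M₂ M₃ : ℝ) (P Q : ℝ[X]) :
    fourMassInner M₀ M₁ M₂ M₃ (P.comp (X ^ 2)) (X * Q.comp (X ^ 2)) = 0 := by
  unfold fourMassInner
  have hint : (∫ x : ℝ, (P.comp (X ^ 2)).eval x * (X * Q.comp (X ^ 2)).eval x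
        * Real.exp (-x ^ 2)) = 0 := by
    rw [← integral_odd_gauss (P * Q)]
    congr 1; funext x; simp [eval_comp, eval_mul]; ring
  have d1 : (derivative (P.comp (X ^ 2))).eval 0 = 0 := by simp [derivative_comp]
  have d3 : (derivative (derivative (derivative (P.comp (X ^ 2))))).eval 0 = 0 := by
    simp [derivative_comp, derivative_mul]
  have d0' : (X * Q.comp (X ^ 2)).eval 0 = 0 := by simp
  have d2' : (derivative (derivative (X * Q.comp (X ^ 2)))).eval 0 = 0 := by
    simp [derivative_mul, derivative_comp]
  rw [hint, d1, d3, d0', d2']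
  ring

lemma fmi_odd_even (M₀ M₁ M₂ M₃ : ℝ) (P Q : ℝ[X]) :
    fourMassInner M₀ M₁ M₂ M₃ (X * P.comp (X ^ 2)) (Q.comp (X ^ 2)) = 0 := by
  unfold fourMassInner
  have hint : (∫ x : ℝ, (X * P.comp (X ^ 2)).eval x * (Q.comp (X ^ 2)).eval x
        * Real.exp (-x ^ 2)) = 0 := by
    rw [← integral_odd_gauss (P * Q)]
    congr 1; funext x; simp [eval_comp, eval_mul]; ring
  have d0 : (X * P.comp (X ^ 2)).eval 0 = 0 := by simp
  have d2 : (derivative (derivative (X * P.comp (X ^ 2)))).eval 0 = 0 := by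
    simp [derivative_mul, derivative_comp]
  have d1' : (derivative (Q.comp (X ^ 2))).eval 0 = 0 := by simp [derivative_comp]
  have d3' : (derivative (derivative (derivative (Q.comp (X ^ 2))))).eval 0 = 0 := by
    simp [derivative_comp, derivative_mul]
  rw [hint, d0, d2, d1', d3']
  ring

end StmtAux

open StmtAux in
theorem stmt12 (M₀ M₁ M₂ M₃ : ℝ) (h₀ : 0 ≤ M₀) (h₁ : 0 ≤ M₁) (h₂ : 0 ≤ M₂) (h₃ : 0 ≤ M₃)
    (S L Lt : ℕ → Polynomial ℝ)
    (hS : IsMonicOrthSeq (fourMassInner M₀ M₁ M₂ M₃) S)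
    (hL : IsMonicOrthSeq (laguerreSobolevInner (-(1 / 2)) M₀ (4 * M₂)) L)
    (hLt : IsMonicOrthSeq (laguerreSobolevInner (1 / 2) M₁ (36 * M₃)) Lt) :
    ∀ n : ℕ, S (2 * n) = (L n).comp (X ^ 2) ∧ S (2 * n + 1) = X * (Lt n).comp (X ^ 2) := by
  intro n
  have hLn : (L n).natDegree = n := natDegree_eq_of_degree_eq_some (hL n).2.1
  have hLtn : (Lt n).natDegree = n := natDegree_eq_of_degree_eq_some (hLt n).2.1
  constructor
  · -- even case
    refine unique_step M₀ M₁ M₂ M₃ h₀ h₁ h₂ h₃ S hS (2 * n) _ ?_ ?_ ?_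
    · exact (hL n).1.comp (monic_X_pow 2) (by simp)
    · have hne : (L n).comp (X ^ 2) ≠ 0 := ((hL n).1.comp (monic_X_pow 2) (by simp)).ne_zero
      have hnd : ((L n).comp (X ^ 2)).natDegree = 2 * n := by
        rw [natDegree_comp, hLn, natDegree_X_pow]; omega
      rw [degree_eq_natDegree hne, hnd]
    · refine fmi_orth_of_monomials M₀ M₁ M₂ M₃ _ (2 * n) (fun k hk => ?_)
      rcases Nat.even_or_odd k with ⟨j, hj⟩ | ⟨j, hj⟩
      · have hX : (X : ℝ[X]) ^ k = (X ^ j).comp (X ^ 2) := by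
          rw [X_pow_comp, ← pow_mul]
          congr 1; omega
        rw [hX, fmi_even_even]
        exact (hL n).2.2 _ (by rw [degree_X_pow]; exact_mod_cast (by omega : j < n))
      · have hX : (X : ℝ[X]) ^ k = X * (X ^ j).comp (X ^ 2) := by
          rw [X_pow_comp, ← pow_mul, show k = 2 * j + 1 from hj, pow_succ']
        rw [hX, fmi_even_odd]
  · -- odd case
    refine unique_step M₀ M₁ M₂ M₃ h₀ h₁ h₂ h₃ S hS (2 * n + 1) _ ?_ ?_ ?_
    · exact monic_X.mul ((hLt n).1.comp (monic_X_pow 2) (by simp))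
    · have hm : (X * (Lt n).comp (X ^ 2)).Monic :=
        monic_X.mul ((hLt n).1.comp (monic_X_pow 2) (by simp))
      have hnd : (X * (Lt n).comp (X ^ 2)).natDegree = 2 * n + 1 := by
        rw [natDegree_mul X_ne_zero ((hLt n).1.comp (monic_X_pow 2) (by simp)).ne_zero,
          natDegree_X, natDegree_comp, hLtn, natDegree_X_pow]
        omega
      rw [degree_eq_natDegree hm.ne_zero, hnd]
    · refine fmi_orth_of_monomials M₀ M₁ M₂ M₃ _ (2 * n + 1) (fun k hk => ?_)
      rcases Nat.even_or_odd k with ⟨j, hj⟩ | ⟨j, hj⟩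
      · have hX : (X : ℝ[X]) ^ k = (X ^ j).comp (X ^ 2) := by
          rw [X_pow_comp, ← pow_mul]
          congr 1; omega
        rw [hX, fmi_odd_even]
      · have hX : (X : ℝ[X]) ^ k = X * (X ^ j).comp (X ^ 2) := by
          rw [X_pow_comp, ← pow_mul, show k = 2 * j + 1 from hj, pow_succ']
        rw [hX, fmi_odd_odd]
        exact (hLt n).2.2 _ (by rw [degree_X_pow]; exact_mod_cast (by omega : j < n))
end

section
/- For every n ≥ 1 the following identity of real polynomials holds: x² · Σ_{k=0}^{2n} (2^k/k!) · Hₖ′(0) · Hₖ(x) = ((−1)^{n−1}/(n−1)!) · (2x·H₂ₙ(x) + H₂ₙ₋₁(x)). Equivalently, the derivated Hermite kernel K₂ₙ^{(0,1)}(x,0) = Σ_{k=0}^{2n} Hₖ(x)Hₖ′(0)/‖Hₖ‖² equals ((−1)^{n−1}/(√π·(n−1)!)) · (2x·H₂ₙ(x) + H₂ₙ₋₁(x))/x², and K₂ₙ₋₁^{(0,1)}(x,0) equals the same expression. -/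
open Polynomial Finset

/-- The monic Hermite polynomials: `H₀ = 1`, `H₁ = X`,
`H_{n+2} = X·H_{n+1} − ((n+1)/2)·Hₙ`. -/
noncomputable def hermiteM : ℕ → Polynomial ℝ
  | 0 => 1
  | 1 => X
  | n + 2 => X * hermiteM (n + 1) - C (((n : ℝ) + 1) / 2) * hermiteM n

/-- The squared norm of the `n`-th monic Hermite polynomial: `√π · n! / 2ⁿ`. -/
noncomputable def hermiteNormSq (n : ℕ) : ℝ :=
  Real.sqrt Real.pi * n.factorial / 2 ^ n

lemma hermiteM_add_two (n : ℕ) :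
    hermiteM (n+2) = X * hermiteM (n + 1) - C (((n : ℝ) + 1) / 2) * hermiteM n := rfl

lemma hermiteM_vals (m : ℕ) :
    (hermiteM (2*m)).eval 0 = (-1)^m * (2*m).factorial / (4^m * m.factorial) ∧
    (hermiteM (2*m+1)).eval 0 = 0 ∧
    (derivative (hermiteM (2*m))).eval 0 = 0 ∧
    (derivative (hermiteM (2*m+1))).eval 0
      = (-1)^m * (2*m+1).factorial / (4^m * m.factorial) := by
  induction m with
  | zero => norm_num [hermiteM]
  | succ m ih =>
    obtain ⟨h0, h1, h2, h3⟩ := ih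
    have e2 : 2*(m+1) = (2*m)+2 := by ring
    have e3 : 2*(m+1)+1 = (2*m+1)+2 := by ring
    rw [e2, show 2*m+2+1 = (2*m+1)+2 from by ring, show 2*m+2 = (2*m)+2 from rfl,
      hermiteM_add_two, hermiteM_add_two]
    have hf : ((m+1).factorial : ℝ) = (m+1) * m.factorial := by
      push_cast [Nat.factorial_succ]; ring
    have hf2 : ((2*m+2).factorial : ℝ) = (2*(m:ℝ)+2)*(2*m+1) * (2*m).factorial := by
      rw [show 2*m+2 = (2*m+1)+1 by ring, Nat.factorial_succ, Nat.factorial_succ]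
      push_cast; ring
    have hf3 : ((2*m+1+2).factorial : ℝ) = (2*(m:ℝ)+3)*(2*m+2)*(2*m+1) * (2*m).factorial := by
      rw [show 2*m+1+2 = ((2*m+1)+1)+1 by ring, Nat.factorial_succ, Nat.factorial_succ,
        Nat.factorial_succ]
      push_cast; ring
    have hf1 : ((2*m+1).factorial : ℝ) = (2*(m:ℝ)+1) * (2*m).factorial := by
      rw [Nat.factorial_succ]; push_cast; ring
    have hm : (m.factorial : ℝ) ≠ 0 := Nat.cast_ne_zero.mpr m.factorial_ne_zero
    have g0 : eval 0 (hermiteM ((2*m)+2)) =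
        (-1)^(m+1) * ((2*m+2).factorial : ℝ) / (4^(m+1) * (m+1).factorial) := by
      rw [hermiteM_add_two]
      simp [h0, h1, hf, hf2]
      field_simp
      ring
    refine ⟨g0, ?_, ?_, ?_⟩
    · simp [h0, h1, g0]
    · simp [derivative_mul, h0, h1, h2, h3]
    · 
      simp [derivative_mul, h0, h1, h2, h3, g0, hf, hf1, hf2, hf3]
      field_simp
      ring

lemma hermiteM_key (m : ℕ) (x : ℝ) :
    x^2 * ∑ k ∈ range (2*m+3),
        (2:ℝ)^k / k.factorial * (derivative (hermiteM k)).eval 0 * (hermiteM k).eval x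
      = (-1)^m / m.factorial *
        (2*x*(hermiteM (2*m+2)).eval x + (hermiteM (2*m+1)).eval x) := by
  induction m with
  | zero =>
    rw [show 2*0+3 = 3 from rfl, Finset.sum_range_succ, Finset.sum_range_succ,
      Finset.sum_range_succ, Finset.sum_range_zero,
      show (2:ℕ) = 0+2 from rfl, hermiteM_add_two]
    simp [hermiteM]
    ring
  | succ m ih =>
    have hm : (m.factorial : ℝ) ≠ 0 := Nat.cast_ne_zero.mpr m.factorial_ne_zero
    have hm1 : ((m:ℝ)+1) ≠ 0 := by positivity
    have hf : ((m+1).factorial : ℝ) = ((m:ℝ)+1) * m.factorial := by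
      push_cast [Nat.factorial_succ]; ring
    have hd4 : (derivative (hermiteM (2*m+4))).eval 0 = 0 := by
      rw [show 2*m+4 = 2*(m+2) from by ring]
      exact (hermiteM_vals (m+2)).2.2.1
    have hd3 : (derivative (hermiteM (2*m+3))).eval 0
        = (-1)^(m+1) * ((2*m+3).factorial : ℝ) / (4^(m+1) * (m+1).factorial) := by
      have := (hermiteM_vals (m+1)).2.2.2
      rw [show 2*(m+1)+1 = 2*m+3 from by ring] at this
      exact this
    have hc3 : (2:ℝ)^(2*m+3) / (2*m+3).factorial *
        ((-1)^(m+1) * ((2*m+3).factorial : ℝ) / (4^(m+1) * (m+1).factorial))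
        = 2*(-1)^(m+1) / ((m+1).factorial) := by
      have hp : (2:ℝ)^(2*m+3) = 2 * 4^(m+1) := by
        rw [show 2*m+3 = 2*(m+1)+1 from by ring, pow_succ, pow_mul]; norm_num; ring
      have h1 : ((2*m+3).factorial : ℝ) ≠ 0 := Nat.cast_ne_zero.mpr (2*m+3).factorial_ne_zero
      have h2 : ((m+1).factorial : ℝ) ≠ 0 := Nat.cast_ne_zero.mpr (m+1).factorial_ne_zero
      have h3 : (4:ℝ)^(m+1) ≠ 0 := by positivity
      rw [hp]; field_simp
    have he4 : (hermiteM (2*m+4)).eval x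
        = x * (hermiteM (2*m+3)).eval x - ((2*(m:ℝ)+3)/2) * (hermiteM (2*m+2)).eval x := by
      rw [show 2*m+4 = (2*m+2)+2 from by ring, hermiteM_add_two,
        show (2*m+2)+1 = 2*m+3 from rfl]
      simp only [eval_sub, eval_mul, eval_X, eval_C]; push_cast; ring
    have he3 : (hermiteM (2*m+3)).eval x
        = x * (hermiteM (2*m+2)).eval x - ((m:ℝ)+1) * (hermiteM (2*m+1)).eval x := by
      rw [show 2*m+3 = (2*m+1)+2 from by ring, hermiteM_add_two,
        show (2*m+1)+1 = 2*m+2 from rfl]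
      simp only [eval_sub, eval_mul, eval_X, eval_C]; push_cast; ring
    rw [show 2*(m+1)+3 = (2*m+4)+1 from by ring, Finset.sum_range_succ,
      show 2*m+4 = (2*m+3)+1 from rfl, Finset.sum_range_succ,
      show (2*m+3)+1 = 2*m+4 from rfl, hd4, hd3, hc3,
      show 2*(m+1)+2 = 2*m+4 from by ring, show 2*(m+1)+1 = 2*m+3 from by ring,
      he4, he3, hf]
    rw [mul_add, mul_add, ih]
    field_simp
    ring

theorem stmt15 (n : ℕ) (hn : 1 ≤ n) :
    (X ^ 2 * ∑ k ∈ range (2 * n + 1),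
        C ((2 : ℝ) ^ k / k.factorial * (derivative (hermiteM k)).eval 0) * hermiteM k =
      C ((-1 : ℝ) ^ (n - 1) / (n - 1).factorial) *
        (2 * X * hermiteM (2 * n) + hermiteM (2 * n - 1))) ∧
    (∀ x : ℝ, x ≠ 0 →
      ∑ k ∈ range (2 * n + 1),
          (hermiteM k).eval x * (derivative (hermiteM k)).eval 0 / hermiteNormSq k =
        (-1 : ℝ) ^ (n - 1) / (Real.sqrt Real.pi * (n - 1).factorial) *
          ((2 * x * (hermiteM (2 * n)).eval x + (hermiteM (2 * n - 1)).eval x) / x ^ 2)) ∧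
    (∀ x : ℝ, x ≠ 0 →
      ∑ k ∈ range (2 * n),
          (hermiteM k).eval x * (derivative (hermiteM k)).eval 0 / hermiteNormSq k =
        (-1 : ℝ) ^ (n - 1) / (Real.sqrt Real.pi * (n - 1).factorial) *
          ((2 * x * (hermiteM (2 * n)).eval x + (hermiteM (2 * n - 1)).eval x) / x ^ 2)) := by
  obtain ⟨m, rfl⟩ : ∃ m, n = m + 1 := ⟨n - 1, by omega⟩
  rw [show 2*(m+1)+1 = 2*m+3 from by ring, show 2*(m+1) = 2*m+2 from by ring,
    show 2*m+2-1 = 2*m+1 from rfl, show m+1-1 = m from rfl]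
  have hπ : Real.sqrt Real.pi ≠ 0 := ne_of_gt (Real.sqrt_pos.mpr Real.pi_pos)
  have h2 : ∀ x : ℝ, x ≠ 0 →
      ∑ k ∈ range (2*m+3),
          (hermiteM k).eval x * (derivative (hermiteM k)).eval 0 / hermiteNormSq k =
        (-1 : ℝ) ^ m / (Real.sqrt Real.pi * m.factorial) *
          ((2 * x * (hermiteM (2*m+2)).eval x + (hermiteM (2*m+1)).eval x) / x ^ 2) := by
    intro x hx
    have hx2 : x^2 ≠ 0 := pow_ne_zero 2 hx
    have hm : (m.factorial : ℝ) ≠ 0 := Nat.cast_ne_zero.mpr m.factorial_ne_zero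
    have step1 : ∑ k ∈ range (2*m+3),
        (hermiteM k).eval x * (derivative (hermiteM k)).eval 0 / hermiteNormSq k
        = (∑ k ∈ range (2*m+3),
            (2:ℝ)^k / k.factorial * (derivative (hermiteM k)).eval 0 * (hermiteM k).eval x)
          / Real.sqrt Real.pi := by
      rw [Finset.sum_div]
      refine Finset.sum_congr rfl fun k _ => ?_
      have hk : (k.factorial : ℝ) ≠ 0 := Nat.cast_ne_zero.mpr k.factorial_ne_zero
      have h2k : (2:ℝ)^k ≠ 0 := by positivity
      unfold hermiteNormSq
      field_simp
    have step2 : ∑ k ∈ range (2*m+3),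
        (2:ℝ)^k / k.factorial * (derivative (hermiteM k)).eval 0 * (hermiteM k).eval x
        = (-1 : ℝ)^m / m.factorial *
          (2 * x * (hermiteM (2*m+2)).eval x + (hermiteM (2*m+1)).eval x) / x^2 := by
      rw [eq_div_iff hx2]
      linear_combination hermiteM_key m x
    rw [step1, step2]
    ring
  refine ⟨?_, h2, ?_⟩
  · apply Polynomial.funext
    intro x
    simp only [eval_mul, eval_pow, eval_finset_sum, eval_add, eval_C, eval_X, eval_ofNat]
    have := hermiteM_key m x
    linear_combination this
  · intro x hx
    have hd : (derivative (hermiteM (2*m+2))).eval 0 = 0 := by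
      have := (hermiteM_vals (m+1)).2.2.1
      rwa [show 2*(m+1) = 2*m+2 from by ring] at this
    have := h2 x hx
    rw [show 2*m+3 = (2*m+2)+1 from rfl, Finset.sum_range_succ, hd] at this
    simpa using this
end

section
/- For every n ≥ 1 the following identity of real polynomials holds: x³ · Σ_{k=0}^{2n−1} (2^k/k!) · Hₖ″(0) · Hₖ(x) = (2·(−1)^{n−1}/(n−1)!) · (2x·H₂ₙ(x) + (1 − 2n·x²)·H₂ₙ₋₁(x)). Equivalently, the derivated Hermite kernel K₂ₙ₋₁^{(0,2)}(x,0) = Σ_{k=0}^{2n−1} Hₖ(x)Hₖ″(0)/‖Hₖ‖² equals (2·(−1)^{n−1}/(√π·(n−1)!)) · (2x·H₂ₙ(x) + (1 − 2n·x²)·H₂ₙ₋₁(x))/x³. -/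
open Polynomial Finset

lemma hermiteM_rec (n : ℕ) :
    hermiteM (n + 2) = X * hermiteM (n + 1) - C (((n : ℝ) + 1) / 2) * hermiteM n := rfl

lemma hermiteM_eval_rec (n : ℕ) (x : ℝ) :
    (hermiteM (n + 2)).eval x
      = x * (hermiteM (n + 1)).eval x - ((n : ℝ) + 1) / 2 * (hermiteM n).eval x := by
  rw [hermiteM_rec]; simp

lemma hermiteM_deriv : ∀ n : ℕ, derivative (hermiteM (n + 1)) = C ((n : ℝ) + 1) * hermiteM n := by
  intro n
  induction n using Nat.twoStepInduction with
  | zero => simp [hermiteM]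
  | one => simp [hermiteM, hermiteM_rec]; ring
  | more n ih1 ih2 =>
    rw [hermiteM_rec (n + 1), derivative_sub, derivative_mul, derivative_X, derivative_mul,
      derivative_C, ih1, ih2]
    apply Polynomial.funext
    intro x
    simp only [show n+1+1=n+2 from rfl, hermiteM_eval_rec, eval_add, eval_sub, eval_mul,
      eval_one, eval_X, eval_C, eval_zero]
    push_cast
    ring

lemma hermiteM_eval0_odd : ∀ m : ℕ, (hermiteM (2 * m + 1)).eval 0 = 0 := by
  intro m
  induction m with
  | zero => simp [hermiteM]
  | succ m ih =>
    have : 2 * (m + 1) + 1 = (2 * m + 1) + 2 := by ring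
    rw [this, hermiteM_eval_rec, ih]
    ring

lemma hermiteM_eval0_even : ∀ m : ℕ, (hermiteM (2 * m)).eval 0
    = (-1) ^ m * (2 * m).factorial / (m.factorial * 4 ^ m) := by
  intro m
  induction m with
  | zero => simp [hermiteM]
  | succ m ih =>
    have h1 : 2 * (m + 1) = (2 * m) + 2 := by ring
    rw [h1, hermiteM_eval_rec, ih]
    have h2 : (2 * m + 2).factorial = (2 * m + 2) * ((2 * m + 1) * (2 * m).factorial) := by
      rw [show 2 * m + 2 = (2 * m + 1) + 1 from rfl, Nat.factorial_succ, Nat.factorial_succ]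
    rw [h2, Nat.factorial_succ]
    have hm : (m.factorial : ℝ) ≠ 0 := Nat.cast_ne_zero.mpr m.factorial_ne_zero
    have h4 : (4 : ℝ) ^ m ≠ 0 := by positivity
    push_cast
    field_simp
    ring

lemma hermiteM_d2 (n : ℕ) :
    derivative (derivative (hermiteM (n + 2)))
      = C (((n : ℝ) + 2) * ((n : ℝ) + 1)) * hermiteM n := by
  rw [show n + 2 = (n + 1) + 1 from rfl, hermiteM_deriv, derivative_C_mul, hermiteM_deriv]
  rw [← mul_assoc, ← C_mul]
  push_cast
  ring_nf

lemma coef_even (m : ℕ) :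
    (2 : ℝ) ^ (2 * m + 2) / (2 * m + 2).factorial
        * (derivative (derivative (hermiteM (2 * m + 2)))).eval 0
      = 4 * (-1) ^ m / m.factorial := by
  rw [hermiteM_d2, eval_mul, eval_C, hermiteM_eval0_even]
  have h2 : ((2 * m + 2).factorial : ℝ)
      = (2 * m + 2) * ((2 * m + 1) * (2 * m).factorial) := by
    rw [show 2 * m + 2 = (2 * m + 1) + 1 from rfl, Nat.factorial_succ, Nat.factorial_succ]
    push_cast; ring
  rw [h2]
  have hm : ((2 * m).factorial : ℝ) ≠ 0 := Nat.cast_ne_zero.mpr (2 * m).factorial_ne_zero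
  have hm' : (m.factorial : ℝ) ≠ 0 := Nat.cast_ne_zero.mpr m.factorial_ne_zero
  have h4 : (4 : ℝ) ^ m ≠ 0 := by positivity
  have hp : (2 : ℝ) ^ (2 * m + 2) = 4 * 4 ^ m := by
    rw [pow_add, pow_mul]; norm_num; ring
  rw [hp]
  push_cast
  field_simp

lemma coef_odd (m : ℕ) :
    (derivative (derivative (hermiteM (2 * m + 3)))).eval 0 = 0 := by
  rw [show 2 * m + 3 = (2 * m + 1) + 2 from rfl, hermiteM_d2, eval_mul, hermiteM_eval0_odd,
    mul_zero]

lemma part1 (n : ℕ) (hn : 1 ≤ n) :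
    X ^ 3 * ∑ k ∈ range (2 * n),
        C ((2 : ℝ) ^ k / k.factorial * (derivative (derivative (hermiteM k))).eval 0) *
          hermiteM k =
      C (2 * (-1 : ℝ) ^ (n - 1) / (n - 1).factorial) *
        (2 * X * hermiteM (2 * n) +
          (1 - C (2 * (n : ℝ)) * X ^ 2) * hermiteM (2 * n - 1)) := by
  induction n, hn using Nat.le_induction with
  | base =>
    have h0 : (derivative (derivative (hermiteM 0))).eval 0 = 0 := by simp [hermiteM]
    have h1 : (derivative (derivative (hermiteM 1))).eval 0 = 0 := by simp [hermiteM]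
    simp only [show 2 * 1 = 2 from rfl, Finset.sum_range_succ, Finset.sum_range_zero, h0, h1,
      mul_zero, map_zero, zero_mul, add_zero, zero_add]
    apply Polynomial.funext
    intro x
    simp only [show (2:ℕ) - 1 = 1 from rfl, show (1:ℕ) - 1 = 0 from rfl, hermiteM_eval_rec,
      eval_mul, eval_add, eval_sub, eval_one, eval_X, eval_C, eval_pow, eval_zero, eval_ofNat]
    norm_num [hermiteM]
    ring
  | succ n hn ih =>
    obtain ⟨k, rfl⟩ := Nat.exists_eq_add_of_le hn
    simp only [show 1 + k - 1 = k from by omega, show 2 * (1 + k) = 2 * k + 2 from by omega,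
      show 2 * (1 + k) - 1 = 2 * k + 1 from by omega] at ih
    simp only [show 1 + k + 1 - 1 = k + 1 from by omega,
      show 2 * (1 + k + 1) = 2 * k + 4 from by omega,
      show 2 * (1 + k + 1) - 1 = 2 * k + 3 from by omega, Nat.cast_add, Nat.cast_one]
    have hs : ∀ f : ℕ → Polynomial ℝ, ∑ j ∈ range (2 * k + 4), f j
        = (∑ j ∈ range (2 * k + 2), f j) + f (2 * k + 2) + f (2 * k + 3) := by
      intro f
      rw [show 2 * k + 4 = (2 * k + 2) + 1 + 1 from rfl, Finset.sum_range_succ,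
        Finset.sum_range_succ]
    rw [hs, coef_odd, mul_zero, map_zero, zero_mul, add_zero, mul_add, ih, coef_even]
    apply Polynomial.funext
    intro x
    have hrec1 := hermiteM_eval_rec (2 * k + 2) x
    have hrec2 := hermiteM_eval_rec (2 * k + 1) x
    rw [show 2 * k + 2 + 2 = 2 * k + 4 from rfl, show 2 * k + 2 + 1 = 2 * k + 3 from rfl] at hrec1
    rw [show 2 * k + 1 + 2 = 2 * k + 3 from rfl, show 2 * k + 1 + 1 = 2 * k + 2 from rfl] at hrec2
    simp only [eval_mul, eval_add, eval_sub, eval_one, eval_X, eval_C, eval_pow, eval_ofNat,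
      map_ofNat]
    rw [show 2 * k + 2 - 1 = 2 * k + 1 from by omega, show 2 * k + 4 - 1 = 2 * k + 3 from by omega,
      hrec1, hrec2]
    push_cast at hrec1 hrec2 ⊢
    have hf : ((k.factorial : ℝ)) ≠ 0 := Nat.cast_ne_zero.mpr k.factorial_ne_zero
    rw [Nat.factorial_succ]
    push_cast
    field_simp
    ring

theorem stmt16 (n : ℕ) (hn : 1 ≤ n) :
    (X ^ 3 * ∑ k ∈ range (2 * n),
        C ((2 : ℝ) ^ k / k.factorial * (derivative (derivative (hermiteM k))).eval 0) *
          hermiteM k =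
      C (2 * (-1 : ℝ) ^ (n - 1) / (n - 1).factorial) *
        (2 * X * hermiteM (2 * n) +
          (1 - C (2 * (n : ℝ)) * X ^ 2) * hermiteM (2 * n - 1))) ∧
    (∀ x : ℝ, x ≠ 0 →
      ∑ k ∈ range (2 * n),
          (hermiteM k).eval x * (derivative (derivative (hermiteM k))).eval 0 /
            hermiteNormSq k =
        2 * (-1 : ℝ) ^ (n - 1) / (Real.sqrt Real.pi * (n - 1).factorial) *
          ((2 * x * (hermiteM (2 * n)).eval x +
            (1 - 2 * (n : ℝ) * x ^ 2) * (hermiteM (2 * n - 1)).eval x) / x ^ 3)) := by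
  refine ⟨part1 n hn, fun x hx => ?_⟩
  have hp := part1 n hn
  have hev := congrArg (eval x) hp
  simp only [eval_mul, eval_add, eval_sub, eval_one, eval_X, eval_C, eval_pow, eval_ofNat,
    eval_finset_sum, map_ofNat] at hev
  have hπ : Real.sqrt Real.pi ≠ 0 := ne_of_gt (Real.sqrt_pos.mpr Real.pi_pos)
  have hterm : ∀ k : ℕ,
      (hermiteM k).eval x * (derivative (derivative (hermiteM k))).eval 0 / hermiteNormSq k
        = ((2 : ℝ) ^ k / k.factorial * (derivative (derivative (hermiteM k))).eval 0
            * (hermiteM k).eval x) / Real.sqrt Real.pi := by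
    intro k
    have hf : ((k.factorial : ℝ)) ≠ 0 := Nat.cast_ne_zero.mpr k.factorial_ne_zero
    have h2 : (2 : ℝ) ^ k ≠ 0 := by positivity
    rw [hermiteNormSq]
    field_simp
  rw [Finset.sum_congr rfl fun k _ => hterm k, ← Finset.sum_div]
  have hf : (((n - 1).factorial : ℝ)) ≠ 0 := Nat.cast_ne_zero.mpr (n - 1).factorial_ne_zero
  have hS : (∑ i ∈ range (2 * n),
        (2:ℝ) ^ i / i.factorial * eval 0 (derivative (derivative (hermiteM i)))
          * eval x (hermiteM i))
      = 2 * (-1 : ℝ) ^ (n - 1) / (n - 1).factorial *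
          (2 * x * eval x (hermiteM (2 * n)) + (1 - 2 * (n:ℝ) * x ^ 2)
            * eval x (hermiteM (2 * n - 1))) / x ^ 3 := by
    rw [eq_div_iff (pow_ne_zero 3 hx)]
    linear_combination hev
  rw [hS]
  field_simp
end

section
/- For every n ≥ 1, Σ_{k=0}^{2n} (2^k/k!)·(Hₖ′(0))² = (2n+1)!/(3·2^{2n−2}·n!·(n−1)!) (equivalently, the derivated Hermite kernels satisfy K₂ₙ₋₁^{(1,1)}(0,0) = K₂ₙ^{(1,1)}(0,0) = (2n+1)!/(3·√π·2^{2n−2}·n!·(n−1)!)); and for every n ≥ 2, Σ_{k=0}^{2n−1} (2^k/k!)·Hₖ(0)·Hₖ″(0) = −(2n−1)!/(3·2^{2n−4}·(n−1)!·(n−2)!) (equivalently, K₂ₙ₋₁^{(0,2)}(0,0) = −(2n−1)!/(3·√π·2^{2n−4}·(n−1)!·(n−2)!)). -/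
open Polynomial Finset

noncomputable def aH (n : ℕ) : ℝ := (hermiteM n).eval 0
noncomputable def bH (n : ℕ) : ℝ := (derivative (hermiteM n)).eval 0
noncomputable def cH (n : ℕ) : ℝ := (derivative (derivative (hermiteM n))).eval 0

lemma aH0 : aH 0 = 1 := by simp [aH, hermiteM]
lemma aH1 : aH 1 = 0 := by simp [aH, hermiteM]
lemma aH_rec (n : ℕ) : aH (n+2) = -(((n:ℝ)+1)/2) * aH n := by
  simp [aH, hermiteM]
lemma bH0 : bH 0 = 0 := by simp [bH, hermiteM]
lemma bH1 : bH 1 = 1 := by simp [bH, hermiteM]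
lemma bH_rec (n : ℕ) : bH (n+2) = aH (n+1) - (((n:ℝ)+1)/2) * bH n := by
  simp [bH, aH, hermiteM, derivative_mul]
lemma cH0 : cH 0 = 0 := by simp [cH, hermiteM]
lemma cH1 : cH 1 = 0 := by simp [cH, hermiteM]
lemma cH_rec (n : ℕ) : cH (n+2) = 2 * bH (n+1) - (((n:ℝ)+1)/2) * cH n := by
  simp [cH, bH, hermiteM, derivative_mul]; ring

lemma aH_odd (m : ℕ) : aH (2*m+1) = 0 := by
  induction m with
  | zero => simpa using aH1
  | succ m ih =>
      have h : 2*(m+1)+1 = (2*m+1)+2 := by ring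
      rw [h, aH_rec, ih]; ring

lemma bH_even (m : ℕ) : bH (2*m) = 0 := by
  induction m with
  | zero => simpa using bH0
  | succ m ih =>
      have h : 2*(m+1) = (2*m)+2 := by ring
      rw [h, bH_rec, ih, aH_odd]; ring

lemma bH_odd (m : ℕ) : bH (2*m+1) = (2*(m:ℝ)+1) * aH (2*m) := by
  induction m with
  | zero => simp [bH1, aH0]
  | succ m ih =>
      have h : 2*(m+1)+1 = (2*m+1)+2 := by ring
      have h2 : (2*m+1)+1 = 2*m+2 := by ring
      rw [h, bH_rec, ih, h2, show 2*m+2 = 2*m+2 from rfl, aH_rec, show 2*(m+1) = (2*m)+2 by ring, aH_rec]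
      push_cast; ring

lemma cH_odd (m : ℕ) : cH (2*m+1) = 0 := by
  induction m with
  | zero => simpa using cH1
  | succ m ih =>
      have h : 2*(m+1)+1 = (2*m+1)+2 := by ring
      rw [h, cH_rec, ih, show (2*m+1)+1 = 2*(m+1) by ring, bH_even]; ring

lemma cH_even (m : ℕ) : cH (2*m+2) = (2*(m:ℝ)+2)*(2*(m:ℝ)+1) * aH (2*m) := by
  induction m with
  | zero =>
      have : cH 2 = 2 * bH 1 - ((0:ℝ)+1)/2 * cH 0 := by simpa using cH_rec 0
      rw [show 2*0+2 = 2 from rfl, this, bH1, cH0]; simp [aH0]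
  | succ m ih =>
      have h : 2*(m+1)+2 = (2*m+2)+2 := by ring
      rw [h, cH_rec, show (2*m+2)+1 = 2*(m+1)+1 by ring, bH_odd, ih,
        show 2*(m+1) = (2*m)+2 by ring, aH_rec]
      push_cast; ring
lemma aH_abs (m : ℕ) : aH (2*m) * (m.factorial * 4^m) = (-1:ℝ)^m * (2*m).factorial := by
  induction m with
  | zero => simp [aH0]
  | succ m ih =>
      have h : 2*(m+1) = (2*m)+2 := by ring
      have hf : ((2*m+2).factorial : ℝ)
          = (2*(m:ℝ)+2) * ((2*(m:ℝ)+1) * (2*m).factorial) := by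
        rw [show 2*m+2 = (2*m+1)+1 by ring, Nat.factorial_succ,
          show 2*m+1 = (2*m)+1 from rfl, Nat.factorial_succ]
        push_cast; ring
      rw [h, aH_rec, hf, Nat.factorial_succ]
      push_cast
      linear_combination (-2*((m:ℝ)+1)*(2*(m:ℝ)+1)) * ih

lemma aH_sq (m : ℕ) : aH (2*m)^2 * ((m.factorial:ℝ) * 4^m)^2 = ((2*m).factorial:ℝ)^2 := by
  have h := aH_abs m
  have h3 : ((-1:ℝ)^m)^2 = 1 := by
    rw [← pow_mul, mul_comm, pow_mul]; norm_num
  calc aH (2*m)^2 * ((m.factorial:ℝ) * 4^m)^2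
      = (aH (2*m) * (m.factorial * 4^m))^2 := by ring
    _ = ((-1:ℝ)^m * (2*m).factorial)^2 := by rw [h]
    _ = ((-1:ℝ)^m)^2 * ((2*m).factorial:ℝ)^2 := by ring
    _ = ((2*m).factorial:ℝ)^2 := by rw [h3]; ring

lemma factNe (k : ℕ) : ((k.factorial : ℝ)) ≠ 0 := Nat.cast_ne_zero.mpr k.factorial_ne_zero

lemma sum1 (m : ℕ) :
    ∑ k ∈ range (2*m+2), (2:ℝ)^k / k.factorial * bH k ^ 2
      = ((2*m+3).factorial : ℝ) / (3 * 2^(2*m) * (m+1).factorial * m.factorial) := by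
  induction m with
  | zero =>
      rw [show 2*0+2 = 0+1+1 from rfl, Finset.sum_range_succ, Finset.sum_range_succ,
        Finset.sum_range_zero, bH0, bH1]
      norm_num [Nat.factorial]
  | succ m ih =>
      rw [show 2*(m+1)+2 = (2*m+2)+1+1 by ring, Finset.sum_range_succ, Finset.sum_range_succ, ih,
        show (2*m+2) = 2*(m+1) by ring, bH_even,
        show 2*m+2+1 = 2*(m+1)+1 by ring, bH_odd]
      have hsq := aH_sq (m+1)
      have hA2 : aH (2*(m+1))^2
          = ((2*(m+1)).factorial:ℝ)^2 / (((m+1).factorial:ℝ) * 4^(m+1))^2 := by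
        rw [eq_div_iff (by positivity : ((((m+1).factorial:ℝ)) * 4^(m+1))^2 ≠ 0)]
        exact hsq
      rw [mul_pow, hA2, show (4:ℝ) = 2^2 by norm_num, ← pow_mul]
      have e1 : ((2*(m+1)+3).factorial : ℝ)
          = (2*(m:ℝ)+5) * ((2*(m:ℝ)+4) * ((2*(m:ℝ)+3) * (2*(m+1)).factorial)) := by
        rw [show 2*(m+1)+3 = (2*(m+1)+2)+1 by ring, Nat.factorial_succ,
          show 2*(m+1)+2 = (2*(m+1)+1)+1 by ring, Nat.factorial_succ,
          show 2*(m+1)+1 = (2*(m+1))+1 from rfl, Nat.factorial_succ]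
        push_cast; ring
      have e2 : ((2*(m+1)+1).factorial : ℝ) = (2*(m:ℝ)+3) * (2*(m+1)).factorial := by
        rw [show 2*(m+1)+1 = (2*(m+1))+1 from rfl, Nat.factorial_succ]
        push_cast; ring
      have e3 : (((m+1)+1).factorial : ℝ) = ((m:ℝ)+2) * (m+1).factorial := by
        rw [Nat.factorial_succ]; push_cast; ring
      have e4 : (((m+1)).factorial : ℝ) = ((m:ℝ)+1) * m.factorial := by
        rw [Nat.factorial_succ]; push_cast; ring
      rw [e1, e2, e3, e4]
      have h2 : ((2*(m+1)).factorial : ℝ) ≠ 0 := factNe _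
      have h3 : ((m+1).factorial : ℝ) ≠ 0 := factNe _
      have h4 : ((m).factorial : ℝ) ≠ 0 := factNe _
      field_simp
      push_cast
      ring

lemma aH2val : aH 2 = -(1/2 : ℝ) := by
  have := aH_rec 0
  rw [show (0:ℕ)+2 = 2 from rfl] at this
  rw [this, aH0]; norm_num

lemma cH2val : cH 2 = 2 := by
  have := cH_rec 0
  rw [show (0:ℕ)+2 = 2 from rfl, show (0:ℕ)+1 = 1 from rfl] at this
  rw [this, bH1, cH0]; norm_num

lemma sum2 (m : ℕ) :
    ∑ k ∈ range (2*m+4), (2:ℝ)^k / k.factorial * aH k * cH k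
      = -(((2*m+3).factorial : ℝ) / (3 * 2^(2*m) * (m+1).factorial * m.factorial)) := by
  induction m with
  | zero =>
      rw [show 2*0+4 = 0+1+1+1+1 from rfl, Finset.sum_range_succ, Finset.sum_range_succ,
        Finset.sum_range_succ, Finset.sum_range_succ, Finset.sum_range_zero,
        cH0, aH1, aH2val, cH2val, show (3:ℕ) = 2*1+1 by norm_num, aH_odd]
      norm_num [Nat.factorial]
  | succ m ih =>
      have hterm : (2:ℝ)^(2*(m+1)+2) / ((2*(m+1)+2).factorial)
            * aH (2*(m+1)+2) * cH (2*(m+1)+2)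
          = -(((2*(m+1)+2).factorial : ℝ)
              / ((m+2).factorial * (m+1).factorial * 4^(m+1))) := by
        have hsq := aH_sq (m+1)
        have hA2 : aH (2*(m+1))^2
            = ((2*(m+1)).factorial:ℝ)^2 / (((m+1).factorial:ℝ) * 4^(m+1))^2 := by
          rw [eq_div_iff (by positivity : ((((m+1).factorial:ℝ)) * 4^(m+1))^2 ≠ 0)]
          exact hsq
        have step1 : (2:ℝ)^(2*(m+1)+2) / ((2*(m+1)+2).factorial)
              * aH (2*(m+1)+2) * cH (2*(m+1)+2)
            = (2:ℝ)^(2*(m+1)+2) / ((2*(m+1)+2).factorial)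
              * (-((2*(m:ℝ)+3)/2) * ((2*(m:ℝ)+4)*(2*(m:ℝ)+3))) * aH (2*(m+1))^2 := by
          rw [aH_rec, cH_even]; push_cast; ring
        rw [step1, hA2]
        have e5 : ((2*(m+1)+2).factorial : ℝ)
            = (2*(m:ℝ)+4) * ((2*(m:ℝ)+3) * (2*(m+1)).factorial) := by
          rw [show 2*(m+1)+2 = (2*(m+1)+1)+1 by ring, Nat.factorial_succ,
            show 2*(m+1)+1 = (2*(m+1))+1 from rfl, Nat.factorial_succ]
          push_cast; ring
        have e6 : ((m+2).factorial : ℝ) = ((m:ℝ)+2) * (m+1).factorial := by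
          rw [show m+2 = (m+1)+1 from rfl, Nat.factorial_succ]; push_cast; ring
        rw [e5, e6, show (4:ℝ) = 2^2 by norm_num, ← pow_mul]
        have h2 : ((2*(m+1)).factorial : ℝ) ≠ 0 := factNe _
        have h3 : ((m+1).factorial : ℝ) ≠ 0 := factNe _
        field_simp
        ring
      have hodd : aH (2*m+5) = 0 := by
        rw [show 2*m+5 = 2*(m+2)+1 by ring]; exact aH_odd _
      rw [show 2*(m+1)+4 = (2*m+4)+1+1 by ring, Finset.sum_range_succ, Finset.sum_range_succ, ih,
        show 2*m+4 = 2*(m+1)+2 by ring, hodd, hterm]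
      have e1 : ((2*(m+1)+3).factorial : ℝ)
          = (2*(m:ℝ)+5) * ((2*(m:ℝ)+4) * ((2*(m:ℝ)+3) * (2*(m+1)).factorial)) := by
        rw [show 2*(m+1)+3 = (2*(m+1)+2)+1 by ring, Nat.factorial_succ,
          show 2*(m+1)+2 = (2*(m+1)+1)+1 by ring, Nat.factorial_succ,
          show 2*(m+1)+1 = (2*(m+1))+1 from rfl, Nat.factorial_succ]
        push_cast; ring
      have e2 : ((2*m+3).factorial : ℝ) = (2*(m:ℝ)+3) * (2*(m+1)).factorial := by
        rw [show 2*m+3 = (2*(m+1))+1 by ring, Nat.factorial_succ]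
        push_cast; ring
      have e5 : ((2*(m+1)+2).factorial : ℝ)
          = (2*(m:ℝ)+4) * ((2*(m:ℝ)+3) * (2*(m+1)).factorial) := by
        rw [show 2*(m+1)+2 = (2*(m+1)+1)+1 by ring, Nat.factorial_succ,
          show 2*(m+1)+1 = (2*(m+1))+1 from rfl, Nat.factorial_succ]
        push_cast; ring
      have e6 : ((m+2).factorial : ℝ) = ((m:ℝ)+2) * (m+1).factorial := by
        rw [show m+2 = (m+1)+1 from rfl, Nat.factorial_succ]; push_cast; ring
      have e4 : (((m+1)).factorial : ℝ) = ((m:ℝ)+1) * m.factorial := by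
        rw [Nat.factorial_succ]; push_cast; ring
      rw [e1, e2, e5, e6, e4, show (4:ℝ) = 2^2 by norm_num, ← pow_mul]
      have h2 : ((2*(m+1)).factorial : ℝ) ≠ 0 := factNe _
      have h4 : ((m).factorial : ℝ) ≠ 0 := factNe _
      field_simp
      ring

lemma sum1' (m : ℕ) :
    ∑ k ∈ range (2*m+3), (2:ℝ)^k / k.factorial * bH k ^ 2
      = ((2*m+3).factorial : ℝ) / (3 * 2^(2*m) * (m+1).factorial * m.factorial) := by
  rw [show 2*m+3 = (2*m+2)+1 by ring, Finset.sum_range_succ, sum1]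
  have hz : bH (2*m+2) = 0 := by rw [show 2*m+2 = 2*(m+1) by ring]; exact bH_even _
  rw [hz]
  norm_num

lemma normconv (k : ℕ) (x : ℝ) :
    x / hermiteNormSq k = ((2:ℝ)^k / k.factorial * x) / Real.sqrt Real.pi := by
  have h1 : Real.sqrt Real.pi ≠ 0 := by positivity
  have h2 : ((k.factorial : ℝ)) ≠ 0 := factNe k
  have h3 : ((2:ℝ))^k ≠ 0 := by positivity
  unfold hermiteNormSq
  field_simp

lemma bH_def (k : ℕ) : (derivative (hermiteM k)).eval 0 = bH k := rfl
lemma aH_def (k : ℕ) : (hermiteM k).eval 0 = aH k := rfl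
lemma cH_def (k : ℕ) : (derivative (derivative (hermiteM k))).eval 0 = cH k := rfl


theorem stmt18 :
    (∀ n : ℕ, 1 ≤ n →
      (∑ k ∈ range (2 * n + 1),
          (2 : ℝ) ^ k / k.factorial * ((derivative (hermiteM k)).eval 0) ^ 2 =
        (2 * n + 1).factorial / (3 * 2 ^ (2 * n - 2) * n.factorial * (n - 1).factorial)) ∧
      (∑ k ∈ range (2 * n),
          (2 : ℝ) ^ k / k.factorial * ((derivative (hermiteM k)).eval 0) ^ 2 =
        (2 * n + 1).factorial / (3 * 2 ^ (2 * n - 2) * n.factorial * (n - 1).factorial)) ∧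
      (∑ k ∈ range (2 * n + 1),
          ((derivative (hermiteM k)).eval 0) ^ 2 / hermiteNormSq k =
        (2 * n + 1).factorial /
          (3 * Real.sqrt Real.pi * 2 ^ (2 * n - 2) * n.factorial * (n - 1).factorial)) ∧
      (∑ k ∈ range (2 * n),
          ((derivative (hermiteM k)).eval 0) ^ 2 / hermiteNormSq k =
        (2 * n + 1).factorial /
          (3 * Real.sqrt Real.pi * 2 ^ (2 * n - 2) * n.factorial * (n - 1).factorial))) ∧
    (∀ n : ℕ, 2 ≤ n →
      (∑ k ∈ range (2 * n),
          (2 : ℝ) ^ k / k.factorial * (hermiteM k).eval 0 *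
            (derivative (derivative (hermiteM k))).eval 0 =
        -((2 * n - 1).factorial /
          (3 * 2 ^ (2 * n - 4) * (n - 1).factorial * (n - 2).factorial))) ∧
      (∑ k ∈ range (2 * n),
          (hermiteM k).eval 0 * (derivative (derivative (hermiteM k))).eval 0 /
            hermiteNormSq k =
        -((2 * n - 1).factorial /
          (3 * Real.sqrt Real.pi * 2 ^ (2 * n - 4) * (n - 1).factorial *
            (n - 2).factorial)))) := by
  have hpi : Real.sqrt Real.pi ≠ 0 := by positivity
  constructor
  · intro n hn
    obtain ⟨m, rfl⟩ := Nat.exists_eq_succ_of_ne_zero (by omega : n ≠ 0)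
    simp only [bH_def]
    rw [show 2*(m+1)-2 = 2*m by omega, show m+1-1 = m by omega,
      show 2*(m+1)+1 = 2*m+3 by ring, show 2*(m+1) = 2*m+2 by ring]
    refine ⟨sum1' m, sum1 m, ?_, ?_⟩
    · calc ∑ k ∈ range (2*m+3), bH k ^ 2 / hermiteNormSq k
          = ∑ k ∈ range (2*m+3), ((2:ℝ)^k / k.factorial * bH k ^ 2) / Real.sqrt Real.pi :=
            Finset.sum_congr rfl (fun k _ => normconv k _)
        _ = (∑ k ∈ range (2*m+3), (2:ℝ)^k / k.factorial * bH k ^ 2) / Real.sqrt Real.pi := by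
            rw [Finset.sum_div]
        _ = _ := by rw [sum1']; field_simp
    · calc ∑ k ∈ range (2*m+2), bH k ^ 2 / hermiteNormSq k
          = ∑ k ∈ range (2*m+2), ((2:ℝ)^k / k.factorial * bH k ^ 2) / Real.sqrt Real.pi :=
            Finset.sum_congr rfl (fun k _ => normconv k _)
        _ = (∑ k ∈ range (2*m+2), (2:ℝ)^k / k.factorial * bH k ^ 2) / Real.sqrt Real.pi := by
            rw [Finset.sum_div]
        _ = _ := by rw [sum1]; field_simp
  · intro n hn
    obtain ⟨m, rfl⟩ := Nat.exists_eq_add_of_le hn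
    simp only [aH_def, cH_def]
    rw [show 2*(2+m)-1 = 2*m+3 by omega, show 2*(2+m)-4 = 2*m by omega,
      show (2+m)-1 = m+1 by omega, show (2+m)-2 = m by omega,
      show 2*(2+m) = 2*m+4 by ring]
    refine ⟨sum2 m, ?_⟩
    calc ∑ k ∈ range (2*m+4), aH k * cH k / hermiteNormSq k
        = ∑ k ∈ range (2*m+4), ((2:ℝ)^k / k.factorial * aH k * cH k) / Real.sqrt Real.pi := by
          refine Finset.sum_congr rfl (fun k _ => ?_)
          rw [normconv]; ring_nf
      _ = (∑ k ∈ range (2*m+4), (2:ℝ)^k / k.factorial * aH k * cH k) / Real.sqrt Real.pi := by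
          rw [Finset.sum_div]
      _ = _ := by rw [sum2]; field_simp
end
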